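/- Let (Ω, F, μ) be a probability space, X₀ : Ω → ℝ^p a random vector and Y₀ : Ω → ℝ a square-integrable random variable. Let g₁, …, g_N : ℝ^p → ℝ be measurable functions with each g_i(X₀) square-integrable, and set ḡ = (1/N)·Σ_{i=1}^N g_i. Let I₁, …, I_M : Ω → {1, …, N} be i.i.d. uniformly distributed on {1, …, N} and independent of the pair (X₀, Y₀). Then E[ (Y₀ − (1/M)·Σ_{j=1}^M g_{I_j}(X₀))² ] = E[ (Y₀ − ḡ(X₀))² ] + (1/M)·(1/N)·Σ_{i=1}^N E[ (g_i(X₀) − ḡ(X₀))² ]. -/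

import Mathlib

open MeasureTheory

section Aux
open Finset ENNReal

variable {N M : ℕ} [NeZero N] [NeZero M]

private lemma bagged_prodsum (F : Fin M → Fin N → ℝ) :
    ∑ k : Fin M → Fin N, ∏ j, F j (k j) = ∏ j, ∑ v, F j v := by
  rw [Finset.prod_univ_sum, Fintype.piFinset_univ]

private lemma bagged_sumA (f : Fin N → ℝ) (j : Fin M) :
    ∑ k : Fin M → Fin N, ((N:ℝ)⁻¹)^M * f (k j) = (N:ℝ)⁻¹ * ∑ i, f i := by
  have hN : (N:ℝ) ≠ 0 := Nat.cast_ne_zero.mpr (NeZero.ne N)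
  have h1 : ∀ k : Fin M → Fin N, ((N:ℝ)⁻¹)^M * f (k j)
      = ∏ j', ((N:ℝ)⁻¹ * if j' = j then f (k j') else 1) := by
    intro k
    rw [Finset.prod_mul_distrib, Finset.prod_const, Finset.prod_ite_eq']
    simp [Finset.card_univ]
  rw [Finset.sum_congr rfl (fun k _ => h1 k),
    bagged_prodsum (fun j' v => (N:ℝ)⁻¹ * if j' = j then f v else 1)]
  have h2 : ∀ j' : Fin M, (∑ v, ((N:ℝ)⁻¹ * if j' = j then f v else 1))
      = if j' = j then (N:ℝ)⁻¹ * ∑ i, f i else 1 := by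
    intro j'
    by_cases h : j' = j <;> simp [h, ← Finset.mul_sum, Finset.card_univ, hN]
  rw [Finset.prod_congr rfl (fun j' _ => h2 j'), Finset.prod_ite_eq']
  simp

private lemma bagged_sumB (f h : Fin N → ℝ) (j j' : Fin M) (hjj : j ≠ j') :
    ∑ k : Fin M → Fin N, ((N:ℝ)⁻¹)^M * (f (k j) * h (k j'))
      = ((N:ℝ)⁻¹ * ∑ i, f i) * ((N:ℝ)⁻¹ * ∑ i, h i) := by
  have hN : (N:ℝ) ≠ 0 := Nat.cast_ne_zero.mpr (NeZero.ne N)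
  have h1 : ∀ k : Fin M → Fin N, ((N:ℝ)⁻¹)^M * (f (k j) * h (k j'))
      = ∏ l, ((N:ℝ)⁻¹ * if l = j then f (k l) else if l = j' then h (k l) else 1) := by
    intro k
    rw [Finset.prod_mul_distrib, Finset.prod_const, Finset.card_univ]
    congr 1
    · simp
    rw [← Finset.mul_prod_erase univ _ (mem_univ j),
        ← Finset.mul_prod_erase (univ.erase j) _ (Finset.mem_erase.mpr ⟨Ne.symm hjj, mem_univ j'⟩)]
    rw [Finset.prod_eq_one]
    · simp [hjj, Ne.symm hjj]
    intro x hx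
    simp only [Finset.mem_erase] at hx
    simp [hx.1, hx.2.1]
  rw [Finset.sum_congr rfl (fun k _ => h1 k),
    bagged_prodsum (fun l v => (N:ℝ)⁻¹ * if l = j then f v else if l = j' then h v else 1)]
  have h2 : ∀ l : Fin M, (∑ v, ((N:ℝ)⁻¹ * if l = j then f v else if l = j' then h v else 1))
      = if l = j then (N:ℝ)⁻¹ * ∑ i, f i else if l = j' then (N:ℝ)⁻¹ * ∑ i, h i else 1 := by
    intro l
    by_cases hl : l = j
    · simp [hl, ← Finset.mul_sum]
    by_cases hl' : l = j'
    · simp [hl, hl', ← Finset.mul_sum]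
    · simp [hl, hl', Finset.card_univ, hN]
  rw [Finset.prod_congr rfl (fun l _ => h2 l)]
  rw [← Finset.mul_prod_erase univ _ (mem_univ j),
      ← Finset.mul_prod_erase (univ.erase j) _ (Finset.mem_erase.mpr ⟨Ne.symm hjj, mem_univ j'⟩)]
  rw [Finset.prod_eq_one]
  · simp [hjj, Ne.symm hjj]
  intro x hx
  simp only [Finset.mem_erase] at hx
  simp [hx.1, hx.2.1]

private lemma bagged_alg (y : ℝ) (a : Fin N → ℝ) :
    ∑ k : Fin M → Fin N, ((N:ℝ)⁻¹)^M * (y - (M:ℝ)⁻¹ * ∑ j, a (k j))^2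
      = (y - (N:ℝ)⁻¹ * ∑ i, a i)^2
        + (M:ℝ)⁻¹ * ((N:ℝ)⁻¹ * ∑ i, (a i - (N:ℝ)⁻¹ * ∑ i', a i')^2) := by
  have hN : (N:ℝ) ≠ 0 := Nat.cast_ne_zero.mpr (NeZero.ne N)
  have hM : (M:ℝ) ≠ 0 := Nat.cast_ne_zero.mpr (NeZero.ne M)
  set abar : ℝ := (N:ℝ)⁻¹ * ∑ i, a i with habar
  set b : Fin N → ℝ := fun i => a i - abar with hb
  set c : ℝ := y - abar with hc
  have hsum_b : ∑ i, b i = 0 := by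
    simp only [hb, Finset.sum_sub_distrib, Finset.sum_const, Finset.card_univ,
      Fintype.card_fin, nsmul_eq_mul, habar]
    field_simp
    ring
  have hptwise : ∀ k : Fin M → Fin N,
      (y - (M:ℝ)⁻¹ * ∑ j, a (k j))^2
        = c^2 - 2*c*(M:ℝ)⁻¹ * ∑ j, b (k j)
          + (M:ℝ)⁻¹^2 * ∑ j, ∑ j', b (k j) * b (k j') := by
    intro k
    have : ∑ j, a (k j) = (∑ j, b (k j)) + M * abar := by
      simp [hb, Finset.sum_sub_distrib, Finset.sum_const, Finset.card_univ]
    rw [this]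
    rw [← Finset.sum_mul_sum]
    have : y - (M:ℝ)⁻¹ * ((∑ j, b (k j)) + M * abar) = c - (M:ℝ)⁻¹ * ∑ j, b (k j) := by
      rw [hc]; field_simp; ring
    rw [this]; ring
  rw [Finset.sum_congr rfl (fun k _ => by rw [hptwise k])]
  have expand : ∀ k : Fin M → Fin N,
      ((N:ℝ)⁻¹)^M * (c^2 - 2*c*(M:ℝ)⁻¹ * ∑ j, b (k j)
          + (M:ℝ)⁻¹^2 * ∑ j, ∑ j', b (k j) * b (k j'))
      = ((N:ℝ)⁻¹)^M * c^2 - 2*c*(M:ℝ)⁻¹ * ∑ j, ((N:ℝ)⁻¹)^M * b (k j)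
          + (M:ℝ)⁻¹^2 * ∑ j, ∑ j', ((N:ℝ)⁻¹)^M * (b (k j) * b (k j')) := by
    intro k
    simp only [← Finset.mul_sum]
    ring
  rw [Finset.sum_congr rfl (fun k _ => expand k)]
  rw [Finset.sum_add_distrib, Finset.sum_sub_distrib]
  have t0 : ∑ _k : Fin M → Fin N, ((N:ℝ)⁻¹)^M * c^2 = c^2 := by
    rw [Finset.sum_const, Finset.card_univ, Fintype.card_fun]
    simp [Fintype.card_fin]
    field_simp
  have t1 : ∑ k : Fin M → Fin N, 2*c*(M:ℝ)⁻¹ * ∑ j, ((N:ℝ)⁻¹)^M * b (k j) = 0 := by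
    have : ∀ k : Fin M → Fin N, (2*c*(M:ℝ)⁻¹ * ∑ j, ((N:ℝ)⁻¹)^M * b (k j))
        = ∑ j, 2*c*(M:ℝ)⁻¹ * (((N:ℝ)⁻¹)^M * b (k j)) := fun k => by rw [Finset.mul_sum]
    rw [Finset.sum_congr rfl (fun k _ => this k), Finset.sum_comm]
    refine Finset.sum_eq_zero fun j _ => ?_
    rw [← Finset.mul_sum, bagged_sumA b j, hsum_b]
    ring
  have t2 : ∑ k : Fin M → Fin N, (M:ℝ)⁻¹^2 * ∑ j, ∑ j', ((N:ℝ)⁻¹)^M * (b (k j) * b (k j'))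
      = (M:ℝ)⁻¹ * ((N:ℝ)⁻¹ * ∑ i, b i ^ 2) := by
    rw [← Finset.mul_sum, Finset.sum_comm]
    have inner : ∀ j : Fin M, ∑ k : Fin M → Fin N, ∑ j', ((N:ℝ)⁻¹)^M * (b (k j) * b (k j'))
        = (N:ℝ)⁻¹ * ∑ i, b i ^ 2 := by
      intro j
      rw [Finset.sum_comm]
      have : ∀ j' : Fin M, ∑ k : Fin M → Fin N, ((N:ℝ)⁻¹)^M * (b (k j) * b (k j'))
          = if j' = j then (N:ℝ)⁻¹ * ∑ i, b i ^ 2 else 0 := by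
        intro j'
        by_cases h : j' = j
        · subst h
          rw [show (fun k : Fin M → Fin N => ((N:ℝ)⁻¹)^M * (b (k j') * b (k j')))
              = fun k => ((N:ℝ)⁻¹)^M * (fun i => b i ^ 2) (k j') from funext fun k => by ring_nf,
            bagged_sumA (fun i => b i ^ 2) j']
          simp
        · rw [bagged_sumB b b j j' (fun hh => h hh.symm), hsum_b]
          simp [h]
      rw [Finset.sum_congr rfl (fun j' _ => this j'), Finset.sum_ite_eq' univ j]
      simp
    rw [Finset.sum_congr rfl (fun j _ => inner j), Finset.sum_const, Finset.card_univ,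
      Fintype.card_fin]
    field_simp
    simp only [nsmul_eq_mul]
    field_simp
  rw [t0, t1, t2]
  simp [hc, hb]

private lemma bagged_unif_int (f : (Fin M → Fin N) → ℝ) :
    ∫ k, f k ∂(Measure.pi fun _ : Fin M => (PMF.uniformOfFintype (Fin N)).toMeasure)
      = ∑ k : Fin M → Fin N, ((N:ℝ)⁻¹)^M * f k := by
  have hsing : ∀ k : Fin M → Fin N,
      (Measure.pi fun _ : Fin M => (PMF.uniformOfFintype (Fin N)).toMeasure) {k}
        = ((N:ℝ≥0∞)⁻¹)^M := by
    intro k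
    rw [← Set.univ_pi_singleton, Measure.pi_pi]
    simp [PMF.toMeasure_apply_singleton _ _ (measurableSet_singleton _),
      PMF.uniformOfFintype_apply]
  rw [integral_fintype (Integrable.of_finite)]
  refine Finset.sum_congr rfl fun k _ => ?_
  rw [measureReal_def, hsing k, smul_eq_mul]
  congr 1
  simp [ENNReal.toReal_pow, ENNReal.toReal_inv]

private lemma bagged_key (y : ℝ) (a : Fin N → ℝ) :
    ∫ k, (y - (M:ℝ)⁻¹ * ∑ j, a (k j))^2
        ∂(Measure.pi fun _ : Fin M => (PMF.uniformOfFintype (Fin N)).toMeasure)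
      = (y - (N:ℝ)⁻¹ * ∑ i, a i)^2
        + (M:ℝ)⁻¹ * ((N:ℝ)⁻¹ * ∑ i, (a i - (N:ℝ)⁻¹ * ∑ i', a i')^2) := by
  rw [bagged_unif_int, bagged_alg]

end Aux


/-- **Squared-risk decomposition for the bagged (subsample-averaged) predictor.**
Let `(Ω, F, μ)` be a probability space, `X₀ : Ω → ℝ^p` a random vector and `Y₀ : Ω → ℝ`
square-integrable. Let `g 1, …, g N : ℝ^p → ℝ` be measurable with each `g i (X₀)`
square-integrable, and let `ḡ = (1/N) Σᵢ g i`. Let `Idx 1, …, Idx M : Ω → {1, …, N}` be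
i.i.d. uniform on `{1, …, N}` and independent of `(X₀, Y₀)` — expressed by the equality
of the joint law of `((X₀, Y₀), (Idx j)ⱼ)` with the product of the law of `(X₀, Y₀)` and
the `M`-fold product of uniform distributions. Then
`E[(Y₀ − (1/M) Σⱼ g_{Idx j}(X₀))²]
  = E[(Y₀ − ḡ(X₀))²] + (1/M)·(1/N)·Σᵢ E[(g i (X₀) − ḡ(X₀))²]`. -/
theorem bagged_predictor_squared_risk_decomposition
    {Ω : Type*} [MeasurableSpace Ω] (μ : Measure Ω) [IsProbabilityMeasure μ]
    {p N M : ℕ} [NeZero N] [NeZero M]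
    (X₀ : Ω → Fin p → ℝ) (Y₀ : Ω → ℝ) (hX₀ : Measurable X₀) (hY₀ : Measurable Y₀)
    (hY₀2 : MemLp Y₀ 2 μ)
    (g : Fin N → (Fin p → ℝ) → ℝ) (hg : ∀ i, Measurable (g i))
    (hg2 : ∀ i, MemLp (fun ω => g i (X₀ ω)) 2 μ)
    (Idx : Fin M → Ω → Fin N) (hIdx : ∀ j, Measurable (Idx j))
    (hlaw : Measure.map (fun ω => ((X₀ ω, Y₀ ω), fun j => Idx j ω)) μ =
      (Measure.map (fun ω => (X₀ ω, Y₀ ω)) μ).prod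
        (Measure.pi fun _ : Fin M => (PMF.uniformOfFintype (Fin N)).toMeasure)) :
    ∫ ω, (Y₀ ω - (1 / (M : ℝ)) * ∑ j : Fin M, g (Idx j ω) (X₀ ω)) ^ 2 ∂μ
      = (∫ ω, (Y₀ ω - (1 / (N : ℝ)) * ∑ i : Fin N, g i (X₀ ω)) ^ 2 ∂μ)
        + (1 / (M : ℝ)) * ((1 / (N : ℝ)) * ∑ i : Fin N,
            ∫ ω, (g i (X₀ ω) - (1 / (N : ℝ)) * ∑ i' : Fin N, g i' (X₀ ω)) ^ 2 ∂μ) := by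
  classical
  simp only [one_div]
  set π : Measure (Fin M → Fin N) :=
    Measure.pi fun _ : Fin M => (PMF.uniformOfFintype (Fin N)).toMeasure with hπ
  set ρ : Measure ((Fin p → ℝ) × ℝ) := Measure.map (fun ω => (X₀ ω, Y₀ ω)) μ with hρ
  set e : Ω → (Fin p → ℝ) × ℝ := fun ω => (X₀ ω, Y₀ ω) with he
  have hemeas : Measurable e := hX₀.prodMk hY₀
  set T : Ω → ((Fin p → ℝ) × ℝ) × (Fin M → Fin N) :=
    fun ω => ((X₀ ω, Y₀ ω), fun j => Idx j ω) with hT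
  have hTmeas : Measurable T :=
    hemeas.prodMk (measurable_pi_lambda _ fun j => hIdx j)
  set F : ((Fin p → ℝ) × ℝ) × (Fin M → Fin N) → ℝ :=
    fun z => (z.1.2 - (M:ℝ)⁻¹ * ∑ j, g (z.2 j) z.1.1)^2 with hF
  -- measurability of F
  have hgz : ∀ j : Fin M,
      Measurable (fun z : ((Fin p → ℝ) × ℝ) × (Fin M → Fin N) => g (z.2 j) z.1.1) := by
    intro j
    have heq : (fun z : ((Fin p → ℝ) × ℝ) × (Fin M → Fin N) => g (z.2 j) z.1.1)
        = fun z => ∑ i, if z.2 j = i then g i z.1.1 else 0 := by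
      funext z; simp
    rw [heq]
    refine Finset.measurable_sum _ fun i _ => Measurable.ite ?_ ((hg i).comp measurable_fst.fst)
      measurable_const
    have hm : Measurable fun z : ((Fin p → ℝ) × ℝ) × (Fin M → Fin N) => z.2 j :=
      (measurable_pi_apply j).comp measurable_snd
    exact hm (measurableSet_singleton i)
  have hFmeas : Measurable F :=
    (measurable_fst.snd.sub
      (measurable_const.mul (Finset.measurable_sum _ fun j _ => hgz j))).pow_const 2
  -- MemLp of the composed predictors
  have hGj : ∀ j : Fin M, MemLp (fun ω => g (Idx j ω) (X₀ ω)) 2 μ := by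
    intro j
    have heq : (fun ω => g (Idx j ω) (X₀ ω))
        = fun ω => ∑ i, Set.indicator ((Idx j) ⁻¹' {i}) (fun ω => g i (X₀ ω)) ω := by
      funext ω
      rw [Finset.sum_congr rfl
        (fun i _ => Set.indicator_apply ((Idx j) ⁻¹' {i}) (fun ω => g i (X₀ ω)) ω)]
      simp [Finset.sum_ite_eq]
    rw [heq]
    have h1 := memLp_finset_sum' (μ := μ) Finset.univ fun i (_ : i ∈ Finset.univ) =>
      ((hg2 i).indicator ((hIdx j) (measurableSet_singleton i)))
    have h2 : (fun ω => ∑ i : Fin N, Set.indicator ((Idx j) ⁻¹' {i}) (fun ω => g i (X₀ ω)) ω)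
        = ∑ i : Fin N, Set.indicator ((Idx j) ⁻¹' {i}) (fun ω => g i (X₀ ω)) := by
      funext ω; rw [Finset.sum_apply]
    rw [h2]
    exact h1
  have hHmem : MemLp (fun ω => Y₀ ω - (M:ℝ)⁻¹ * ∑ j, g (Idx j ω) (X₀ ω)) 2 μ := by
    have hs := memLp_finset_sum' (μ := μ) Finset.univ fun j (_ : j ∈ Finset.univ) => hGj j
    have := hY₀2.sub (hs.const_mul ((M:ℝ)⁻¹))
    simp only [Finset.sum_apply] at this
    exact this
  have hLHSint : Integrable (fun ω => (Y₀ ω - (M:ℝ)⁻¹ * ∑ j, g (Idx j ω) (X₀ ω))^2) μ :=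
    hHmem.integrable_sq
  -- transfer LHS to the product measure
  have hFint : Integrable F (ρ.prod π) := by
    rw [hρ, hπ, ← hlaw]
    refine (integrable_map_measure hFmeas.aestronglyMeasurable hTmeas.aemeasurable).mpr ?_
    simpa [Function.comp_def, hF, hT] using hLHSint
  have hLHS : ∫ ω, (Y₀ ω - (M:ℝ)⁻¹ * ∑ j, g (Idx j ω) (X₀ ω))^2 ∂μ
      = ∫ z, F z ∂(ρ.prod π) := by
    rw [hρ, hπ, ← hlaw, integral_map hTmeas.aemeasurable hFmeas.aestronglyMeasurable]
  rw [hLHS, MeasureTheory.integral_prod _ hFint]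
  have hInner : ∀ z1 : (Fin p → ℝ) × ℝ,
      ∫ k, F (z1, k) ∂π
        = (z1.2 - (N:ℝ)⁻¹ * ∑ i, g i z1.1)^2
          + (M:ℝ)⁻¹ * ((N:ℝ)⁻¹ * ∑ i, (g i z1.1 - (N:ℝ)⁻¹ * ∑ i', g i' z1.1)^2) := by
    intro z1
    exact bagged_key z1.2 (fun i => g i z1.1)
  rw [integral_congr_ae (Filter.Eventually.of_forall hInner)]
  -- now split the integral over ρ
  set A : (Fin p → ℝ) × ℝ → ℝ := fun z1 => (z1.2 - (N:ℝ)⁻¹ * ∑ i, g i z1.1)^2 with hA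
  set B : Fin N → (Fin p → ℝ) × ℝ → ℝ :=
    fun i z1 => (g i z1.1 - (N:ℝ)⁻¹ * ∑ i', g i' z1.1)^2 with hB
  have hAmeas : Measurable A :=
    (measurable_snd.sub (measurable_const.mul
      (Finset.measurable_sum _ fun i _ => (hg i).comp measurable_fst))).pow_const 2
  have hBmeas : ∀ i, Measurable (B i) := fun i =>
    (((hg i).comp measurable_fst).sub (measurable_const.mul
      (Finset.measurable_sum _ fun i' _ => (hg i').comp measurable_fst))).pow_const 2
  have hgbar : MemLp (fun ω => (N:ℝ)⁻¹ * ∑ i, g i (X₀ ω)) 2 μ := by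
    have hs := memLp_finset_sum' (μ := μ) Finset.univ fun i (_ : i ∈ Finset.univ) => hg2 i
    have := hs.const_mul ((N:ℝ)⁻¹)
    simp only [Finset.sum_apply] at this
    exact this
  have hAint : Integrable A ρ := by
    rw [hρ]
    refine (integrable_map_measure hAmeas.aestronglyMeasurable hemeas.aemeasurable).mpr ?_
    simpa [Function.comp_def, hA] using (hY₀2.sub hgbar).integrable_sq
  have hBint : ∀ i, Integrable (B i) ρ := by
    intro i
    rw [hρ]
    refine (integrable_map_measure (hBmeas i).aestronglyMeasurable hemeas.aemeasurable).mpr ?_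
    simpa [Function.comp_def, hB] using ((hg2 i).sub hgbar).integrable_sq
  have hsplit : ∫ z1, (A z1 + (M:ℝ)⁻¹ * ((N:ℝ)⁻¹ * ∑ i, B i z1)) ∂ρ
      = ∫ z1, A z1 ∂ρ + (M:ℝ)⁻¹ * ((N:ℝ)⁻¹ * ∑ i, ∫ z1, B i z1 ∂ρ) := by
    rw [integral_add hAint (((integrable_finset_sum _ fun i _ => hBint i).const_mul
      (N:ℝ)⁻¹).const_mul (M:ℝ)⁻¹)]
    congr 1
    rw [integral_const_mul, integral_const_mul, integral_finset_sum _ fun i _ => hBint i]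
  rw [hsplit]
  -- transfer each piece back to μ
  have hAback : ∫ z1, A z1 ∂ρ = ∫ ω, (Y₀ ω - (N:ℝ)⁻¹ * ∑ i, g i (X₀ ω))^2 ∂μ := by
    rw [hρ, integral_map hemeas.aemeasurable hAmeas.aestronglyMeasurable]
  have hBback : ∀ i, ∫ z1, B i z1 ∂ρ
      = ∫ ω, (g i (X₀ ω) - (N:ℝ)⁻¹ * ∑ i', g i' (X₀ ω))^2 ∂μ := by
    intro i
    rw [hρ, integral_map hemeas.aemeasurable (hBmeas i).aestronglyMeasurable]
  rw [hAback]
  congr 3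
  exact Finset.sum_congr rfl fun i _ => hBback i
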